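/- arXiv:1103.2488 — 4 statements merged into one kernel-verified Lean document; each statement's English description precedes it below -/
import Mathlib

section
/- Let D, P be natural numbers, let σ_1, …, σ_P : Fin D → Fin D be maps satisfying σ_m(k) ≠ k for all m and k, and let a : Fin D → ℝ be coefficients such that ∑_{k=1}^{D} a_k · x_k · ∏_{m=1}^{P} x_{σ_m(k)} = 0 for every x ∈ ℝ^D. Then the vector field F with components F_k(x) = a_k · (∏_{m=1}^{P} x_{σ_m(k)}) / ‖x‖^D has vanishing divergence at every x ≠ 0: ∑_{k=1}^{D} ∂F_k/∂x_k (x) = 0. -/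
open scoped RealInnerProductSpace

/-- If `σ_1, …, σ_P : Fin D → Fin D` avoid fixed points and the coefficients `a_k` satisfy
`∑ k, a_k · x_k · ∏ m, x_{σ_m(k)} = 0` for all `x`, then the vector field with components
`F_k(x) = a_k · (∏ m, x_{σ_m(k)}) / ‖x‖^D` is divergence-free away from the origin. -/
theorem divergence_of_generalized_field_vanishes
    (D P : ℕ) (σ : Fin P → Fin D → Fin D)
    (hσ : ∀ m : Fin P, ∀ k : Fin D, σ m k ≠ k)
    (a : Fin D → ℝ)
    (ha : ∀ x : EuclideanSpace ℝ (Fin D),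
      ∑ k : Fin D, a k * x k * ∏ m : Fin P, x (σ m k) = 0)
    (F : EuclideanSpace ℝ (Fin D) → EuclideanSpace ℝ (Fin D))
    (hF : ∀ x : EuclideanSpace ℝ (Fin D), ∀ k : Fin D,
      F x k = a k * (∏ m : Fin P, x (σ m k)) / ‖x‖ ^ D) :
    ∀ x : EuclideanSpace ℝ (Fin D), x ≠ 0 →
      DifferentiableAt ℝ F x ∧
        ∑ k : Fin D,
          ⟪(fderiv ℝ F x) (EuclideanSpace.single k (1 : ℝ)),
            EuclideanSpace.single k (1 : ℝ)⟫ = 0 := by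
  intro x hx
  have hxn : ‖x‖ ≠ 0 := norm_ne_zero_iff.mpr hx
  have hxD : (‖x‖ : ℝ) ^ D ≠ 0 := pow_ne_zero _ hxn
  -- derivative of coordinate maps
  have hproj_fd : ∀ i : Fin D,
      HasFDerivAt (fun y : EuclideanSpace ℝ (Fin D) => y i)
        (EuclideanSpace.proj (𝕜 := ℝ) i) x :=
    fun i => (EuclideanSpace.proj (𝕜 := ℝ) i).hasFDerivAt
  -- derivative of the norm at x
  have hsq : HasFDerivAt (fun y : EuclideanSpace ℝ (Fin D) => ‖y‖ ^ 2)
      (2 • innerSL ℝ x) x := by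
    simpa using (hasFDerivAt_id x).norm_sq
  have hnorm : HasFDerivAt (fun y : EuclideanSpace ℝ (Fin D) => ‖y‖)
      ((1 / (2 * ‖x‖)) • (2 • innerSL ℝ x)) x := by
    have h1 := hsq.sqrt (by positivity)
    have h2 : (fun y : EuclideanSpace ℝ (Fin D) => Real.sqrt (‖y‖ ^ 2))
        = fun y => ‖y‖ := funext fun y => Real.sqrt_sq (norm_nonneg y)
    rw [h2, Real.sqrt_sq (norm_nonneg x)] at h1
    exact h1
  have hpow : HasFDerivAt (fun y : EuclideanSpace ℝ (Fin D) => ‖y‖ ^ D)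
      (((D : ℝ) * ‖x‖ ^ (D - 1)) • ((1 / (2 * ‖x‖)) • (2 • innerSL ℝ x))) x := by
    have := (hasDerivAt_pow D ‖x‖).comp_hasFDerivAt x hnorm
    exact this
  have hinv : HasFDerivAt (fun y : EuclideanSpace ℝ (Fin D) => (‖y‖ ^ D)⁻¹)
      ((-((‖x‖ ^ D) ^ 2)⁻¹) •
        (((D : ℝ) * ‖x‖ ^ (D - 1)) • ((1 / (2 * ‖x‖)) • (2 • innerSL ℝ x)))) x := by
    have := (hasDerivAt_inv hxD).comp_hasFDerivAt x hpow
    exact this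
  -- derivatives of the products
  have hprod : ∀ k : Fin D, HasFDerivAt
      (fun y : EuclideanSpace ℝ (Fin D) => ∏ m : Fin P, y (σ m k))
      (∑ m : Fin P, (∏ j ∈ Finset.univ.erase m, x (σ j k)) •
        (EuclideanSpace.proj (𝕜 := ℝ) (σ m k))) x := by
    intro k
    exact HasFDerivAt.finset_prod fun m _ => hproj_fd (σ m k)
  -- full component derivatives
  set N : EuclideanSpace ℝ (Fin D) →L[ℝ] ℝ :=
    (-((‖x‖ ^ D) ^ 2)⁻¹) •
      (((D : ℝ) * ‖x‖ ^ (D - 1)) • ((1 / (2 * ‖x‖)) • (2 • innerSL ℝ x))) with hN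
  have hcompd : ∀ k : Fin D, HasFDerivAt
      (fun y : EuclideanSpace ℝ (Fin D) => a k * (∏ m : Fin P, y (σ m k)) / ‖y‖ ^ D)
      ((a k * ∏ m : Fin P, x (σ m k)) • N +
        (‖x‖ ^ D)⁻¹ • ((a k) • ∑ m : Fin P, (∏ j ∈ Finset.univ.erase m, x (σ j k)) •
            (EuclideanSpace.proj (𝕜 := ℝ) (σ m k)))) x := by
    intro k
    have h1 := ((hprod k).const_mul (a k)).mul hinv
    have h2 : (fun y : EuclideanSpace ℝ (Fin D) => a k * (∏ m : Fin P, y (σ m k)) / ‖y‖ ^ D)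
        = fun y => (a k * ∏ m : Fin P, y (σ m k)) * (‖y‖ ^ D)⁻¹ :=
      funext fun y => div_eq_mul_inv _ _
    rw [h2]
    exact h1
  have hcomps : ∀ k : Fin D,
      (fun y : EuclideanSpace ℝ (Fin D) => F y k)
        = fun y => a k * (∏ m : Fin P, y (σ m k)) / ‖y‖ ^ D :=
    fun k => funext fun y => hF y k
  have hFd : DifferentiableAt ℝ F x := by
    rw [differentiableAt_euclidean]
    intro k
    rw [hcomps k]
    exact (hcompd k).differentiableAt
  refine ⟨hFd, ?_⟩
  -- identify the components of the total derivative
  have hval : ∀ k : Fin D,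
      (fderiv ℝ F x (EuclideanSpace.single k (1 : ℝ))) k
        = (fderiv ℝ (fun y => F y k) x) (EuclideanSpace.single k (1 : ℝ)) := by
    intro k
    have h0 := ((EuclideanSpace.proj (𝕜 := ℝ) k).hasFDerivAt
      (x := F x)).comp x hFd.hasFDerivAt
    have h1 : HasFDerivAt (fun y => F y k)
        ((EuclideanSpace.proj (𝕜 := ℝ) k).comp (fderiv ℝ F x)) x := h0
    rw [h1.fderiv]
    rfl
  have hterm : ∀ k : Fin D,
      ⟪(fderiv ℝ F x) (EuclideanSpace.single k (1 : ℝ)),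
          EuclideanSpace.single k (1 : ℝ)⟫
        = ((-((‖x‖ ^ D) ^ 2)⁻¹) * ((D : ℝ) * ‖x‖ ^ (D - 1) / ‖x‖))
            * (a k * x k * ∏ m : Fin P, x (σ m k)) := by
    intro k
    rw [EuclideanSpace.inner_single_right]
    simp only [map_one, one_mul]
    rw [hval k, hcomps k, (hcompd k).fderiv]
    have hx_single : ⟪x, EuclideanSpace.single k (1 : ℝ)⟫ = x k := by
      rw [EuclideanSpace.inner_single_right]; simp
    have hproj : ∀ m : Fin P,
        (EuclideanSpace.proj (𝕜 := ℝ) (σ m k))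
          (EuclideanSpace.single k (1 : ℝ)) = 0 := by
      intro m
      simp [EuclideanSpace.single_apply, (hσ m k)]
    simp only [hN, ContinuousLinearMap.add_apply, ContinuousLinearMap.smul_apply,
      ContinuousLinearMap.coe_sum', Finset.sum_apply, ContinuousLinearMap.coe_smul',
      Pi.smul_apply, smul_eq_mul, innerSL_apply_apply, conj_trivial, hx_single, hproj,
      mul_zero, Finset.sum_const_zero]
    field_simp
    ring
  rw [Finset.sum_congr rfl fun k _ => hterm k, ← Finset.mul_sum, ha x, mul_zero]
end

section
/- Let D ≥ 1 be a natural number and let f : ℝ^D → ℝ be continuously differentiable with compact support. Then ∫_{ℝ^D} ⟪x / ‖x‖^D, ∇f(x)⟫ dx = −A_{D−1} · f(0), where A_{D−1} = 2 π^{D/2} / Γ(D/2) is the surface area of the unit (D−1)-sphere. (This is the rigorous, distributional form of the identity δ^D(x) = ∑_{k=1}^{D} ∂/∂x_k ( x_k / (A_{D−1} ‖x‖^D) ).) -/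
open scoped RealInnerProductSpace
open MeasureTheory Real
open scoped ENNReal NNReal

section aux
open Set Metric

variable {D : ℕ}

lemma aux_inner_grad (f : EuclideanSpace ℝ (Fin D) → ℝ) (x v : EuclideanSpace ℝ (Fin D)) :
    ⟪v, gradient f x⟫ = fderiv ℝ f x v := by
  rw [real_inner_comm]
  exact InnerProductSpace.toDual_symm_apply

lemma aux_grad_cont (f : EuclideanSpace ℝ (Fin D) → ℝ) (hf : ContDiff ℝ 1 f) :
    Continuous (gradient f) := by
  unfold gradient
  exact (LinearIsometryEquiv.continuous _).comp (hf.continuous_fderiv one_ne_zero)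

lemma aux_grad_supp (f : EuclideanSpace ℝ (Fin D) → ℝ) (hsupp : HasCompactSupport f) :
    HasCompactSupport (gradient f) := by
  have : gradient f =
      (fun L : EuclideanSpace ℝ (Fin D) →L[ℝ] ℝ =>
        (InnerProductSpace.toDual ℝ (EuclideanSpace ℝ (Fin D))).symm L) ∘ fderiv ℝ f := rfl
  rw [this]
  exact (hsupp.fderiv ℝ).comp_left (map_zero _)

lemma g_smul_eq (f : EuclideanSpace ℝ (Fin D) → ℝ) (y : EuclideanSpace ℝ (Fin D))
    (hy : ‖y‖ = 1) {r : ℝ} (hr : 0 < r) :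
    ⟪(‖r • y‖ ^ D)⁻¹ • (r • y), gradient f (r • y)⟫
      = ((r : ℝ) ^ D)⁻¹ * r * ⟪y, gradient f (r • y)⟫ := by
  rw [norm_smul, hy, Real.norm_eq_abs, abs_of_pos hr, mul_one, smul_smul,
    real_inner_smul_left]

lemma aux_pow_cancel (hD : 1 ≤ D) {r : ℝ} (hr : 0 < r) (t : ℝ) :
    r ^ (D - 1) * ((r ^ D)⁻¹ * r * t) = t := by
  have h1 : r ^ (D - 1) * r = r ^ D := by
    rw [← pow_succ]
    congr 1
    omega
  have h2 : (r : ℝ) ^ D ≠ 0 := pow_ne_zero _ hr.ne'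
  calc r ^ (D - 1) * ((r ^ D)⁻¹ * r * t) = (r ^ (D - 1) * r) * ((r ^ D)⁻¹ * t) := by ring
    _ = r ^ D * ((r ^ D)⁻¹ * t) := by rw [h1]
    _ = t := by rw [← mul_assoc, mul_inv_cancel₀ h2, one_mul]

lemma grad_comp_line_compact_support (f : EuclideanSpace ℝ (Fin D) → ℝ)
    (hsupp : HasCompactSupport f) (y : EuclideanSpace ℝ (Fin D)) (hy : ‖y‖ = 1) :
    HasCompactSupport (fun r : ℝ => fderiv ℝ f (r • y) y) := by
  obtain ⟨R, hR⟩ := (hsupp.fderiv ℝ).isBounded.subset_closedBall 0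
  apply HasCompactSupport.intro (isCompact_closedBall (0:ℝ) R)
  intro r hr
  have h0 : fderiv ℝ f (r • y) = 0 := by
    apply image_eq_zero_of_notMem_tsupport
    intro hmem
    apply hr
    have := hR hmem
    simp only [mem_closedBall, dist_zero_right, norm_smul, hy, mul_one] at this ⊢
    exact this
  simp [h0]

lemma ftc_line (f : EuclideanSpace ℝ (Fin D) → ℝ)
    (hf : ContDiff ℝ 1 f) (hsupp : HasCompactSupport f)
    (y : EuclideanSpace ℝ (Fin D)) (hy : ‖y‖ = 1) :
    ∫ r in Ioi (0:ℝ), fderiv ℝ f (r • y) y = - f 0 := by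
  have hderiv : ∀ r ∈ Ici (0:ℝ),
      HasDerivAt (fun r : ℝ => f (r • y)) (fderiv ℝ f (r • y) y) r := by
    intro r _
    have h1 : HasDerivAt (fun r : ℝ => r • y) y r := by
      simpa using (hasDerivAt_id r).smul_const y
    exact ((hf.differentiable one_ne_zero).differentiableAt.hasFDerivAt).comp_hasDerivAt r h1
  have hcont : Continuous fun r : ℝ => fderiv ℝ f (r • y) y :=
    ((hf.continuous_fderiv one_ne_zero).comp (continuous_id.smul continuous_const)).clm_apply
      continuous_const
  have hint : IntegrableOn (fun r : ℝ => fderiv ℝ f (r • y) y) (Ioi (0:ℝ)) :=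
    (hcont.integrable_of_hasCompactSupport
      (grad_comp_line_compact_support f hsupp y hy)).integrableOn
  have htend : Filter.Tendsto (fun r : ℝ => f (r • y)) Filter.atTop (nhds 0) := by
    obtain ⟨R, hR⟩ := hsupp.isBounded.subset_closedBall 0
    apply Filter.Tendsto.congr' (f₁ := fun _ => (0:ℝ))
    · filter_upwards [Filter.eventually_gt_atTop R] with r hr
      symm
      apply image_eq_zero_of_notMem_tsupport
      intro hmem
      have := hR hmem
      simp only [mem_closedBall, dist_zero_right, norm_smul, hy, mul_one,
        Real.norm_eq_abs] at this
      exact absurd this (not_le.2 (lt_of_lt_of_le hr (le_abs_self r)))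
    · exact tendsto_const_nhds
  have := integral_Ioi_of_hasDerivAt_of_tendsto' hderiv hint htend
  simpa using this

end aux

/-- Distributional form of `δ^D(x) = ∑_k ∂/∂x_k (x_k / (A_{D-1} ‖x‖^D))`:
for every `C¹` compactly supported `f : ℝ^D → ℝ`,
`∫ ⟪x/‖x‖^D, ∇f(x)⟫ dx = −A_{D−1} · f(0)` with `A_{D−1} = 2π^{D/2}/Γ(D/2)`. -/
theorem radial_field_is_dirac_delta
    (D : ℕ) (hD : 1 ≤ D)
    (f : EuclideanSpace ℝ (Fin D) → ℝ)
    (hf : ContDiff ℝ 1 f) (hsupp : HasCompactSupport f) :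
    ∫ x : EuclideanSpace ℝ (Fin D),
        ⟪(‖x‖ ^ D)⁻¹ • x, gradient f x⟫
      = -(2 * π ^ ((D : ℝ) / 2) / Real.Gamma ((D : ℝ) / 2)) * f 0 := by
  classical
  haveI : Nonempty (Fin D) := ⟨⟨0, hD⟩⟩
  have hdim : Module.finrank ℝ (EuclideanSpace ℝ (Fin D)) = D := by
    simp [finrank_euclideanSpace]
  set g : EuclideanSpace ℝ (Fin D) → ℝ :=
    fun x => ⟪(‖x‖ ^ D)⁻¹ • x, gradient f x⟫ with hg
  set ν := (volume : Measure (EuclideanSpace ℝ (Fin D))).toSphere with hν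
  set μ₂ := MeasureTheory.Measure.volumeIoiPow (D - 1) with hμ₂
  set T := homeomorphUnitSphereProd (EuclideanSpace ℝ (Fin D)) with hT
  have hmp : MeasurePreserving T
      ((volume : Measure (EuclideanSpace ℝ (Fin D))).comap Subtype.val) (ν.prod μ₂) := by
    have := (volume : Measure (EuclideanSpace ℝ (Fin D))).measurePreserving_homeomorphUnitSphereProd
    rwa [hdim] at this
  set h : Metric.sphere (0 : EuclideanSpace ℝ (Fin D)) 1 × Set.Ioi (0 : ℝ) → ℝ :=
    fun p => g ((p.2 : ℝ) • (p.1 : EuclideanSpace ℝ (Fin D))) with hh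
  -- continuity, measurability, bounds
  have hgradc : Continuous (gradient f) := aux_grad_cont f hf
  have hgsupp : HasCompactSupport (gradient f) := aux_grad_supp f hsupp
  obtain ⟨C, hC⟩ := hgradc.norm.bounded_above_of_compact_support hgsupp.norm
  have hC' : ∀ x : EuclideanSpace ℝ (Fin D), ‖gradient f x‖ ≤ C := by
    intro x
    have := hC x
    rwa [norm_norm] at this
  obtain ⟨R, hRsupp⟩ := hgsupp.isBounded.subset_closedBall 0
  have hgrad0 : ∀ x : EuclideanSpace ℝ (Fin D), R < ‖x‖ → gradient f x = 0 := by
    intro x hx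
    apply image_eq_zero_of_notMem_tsupport
    intro hmem
    have := hRsupp hmem
    rw [Metric.mem_closedBall, dist_zero_right] at this
    exact absurd this (not_le.2 hx)
  have hgmeas : Measurable g := by
    apply Measurable.inner (𝕜 := ℝ)
    · exact ((measurable_norm.pow_const D).inv.smul measurable_id)
    · exact hgradc.measurable
  have hsm : Continuous fun p :
      Metric.sphere (0 : EuclideanSpace ℝ (Fin D)) 1 × Set.Ioi (0 : ℝ) =>
      (p.2 : ℝ) • (p.1 : EuclideanSpace ℝ (Fin D)) :=
    (continuous_subtype_val.comp continuous_snd).smul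
      (continuous_subtype_val.comp continuous_fst)
  have hhmeas : Measurable h := hgmeas.comp hsm.measurable
  -- Step 1 : full integral to subtype integral
  have step1 : ∫ x, g x
      = ∫ x : ({0}ᶜ : Set (EuclideanSpace ℝ (Fin D))), g x
          ∂((volume : Measure (EuclideanSpace ℝ (Fin D))).comap Subtype.val) := by
    rw [integral_subtype_comap (MeasurableSet.singleton 0).compl g,
      restrict_compl_singleton]
  -- Step 2 : polar coordinates
  have hTx : ∀ x : ({0}ᶜ : Set (EuclideanSpace ℝ (Fin D))), g x = h (T x) := by
    intro x
    have hx0 : (x : EuclideanSpace ℝ (Fin D)) ≠ 0 := x.2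
    have : ((((T x).2 : ℝ)) • ((T x).1 : EuclideanSpace ℝ (Fin D)))
        = (x : EuclideanSpace ℝ (Fin D)) := by
      rw [hT]
      simp only [homeomorphUnitSphereProd_apply_fst_coe,
        homeomorphUnitSphereProd_apply_snd_coe]
      exact smul_inv_smul₀ (norm_ne_zero_iff.2 hx0) _
    simp only [hh, this]
  have step2 : ∫ x : ({0}ᶜ : Set (EuclideanSpace ℝ (Fin D))), g x
      ∂((volume : Measure (EuclideanSpace ℝ (Fin D))).comap Subtype.val)
      = ∫ p, h p ∂(ν.prod μ₂) := by
    simp_rw [hTx]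
    exact hmp.integral_comp (T.measurableEmbedding) h
  -- key per-sphere-point computations
  -- r ↦ g (r • y) on (0,∞)
  have hgr : ∀ (y : EuclideanSpace ℝ (Fin D)), ‖y‖ = 1 → ∀ r : ℝ, 0 < r →
      g (r • y) = ((r : ℝ) ^ D)⁻¹ * r * (fderiv ℝ f (r • y) y) := by
    intro y hy r hr
    rw [hg]
    simp only
    rw [g_smul_eq f y hy hr, aux_inner_grad]
  -- uniform bound needed for integrability
  have hptbound : ∀ (y : EuclideanSpace ℝ (Fin D)), ‖y‖ = 1 → ∀ r : ℝ, r ∈ Set.Ioi (0:ℝ) →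
      ENNReal.ofReal (r ^ (D - 1)) * ENNReal.ofReal ‖g (r • y)‖
        ≤ (Set.Ioc (0:ℝ) R).indicator (fun _ => ENNReal.ofReal C) r := by
    intro y hy r hr
    rw [Set.mem_Ioi] at hr
    by_cases hrR : r ≤ R
    · rw [Set.indicator_of_mem (Set.mem_Ioc.2 ⟨hr, hrR⟩)]
      have hnorm : ‖g (r • y)‖ ≤ (r ^ D)⁻¹ * r * C := by
        rw [hgr y hy r hr]
        rw [Real.norm_eq_abs, abs_mul, abs_of_nonneg (by positivity : (0:ℝ) ≤ (r^D)⁻¹ * r)]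
        apply mul_le_mul_of_nonneg_left _ (by positivity)
        calc |fderiv ℝ f (r • y) y| = |⟪y, gradient f (r • y)⟫| := by
              rw [aux_inner_grad]
          _ ≤ ‖y‖ * ‖gradient f (r • y)‖ := abs_real_inner_le_norm _ _
          _ ≤ C := by rw [hy, one_mul]; exact hC' _
      calc ENNReal.ofReal (r ^ (D - 1)) * ENNReal.ofReal ‖g (r • y)‖
          = ENNReal.ofReal (r ^ (D - 1) * ‖g (r • y)‖) := by
            rw [ENNReal.ofReal_mul (by positivity)]
        _ ≤ ENNReal.ofReal (r ^ (D - 1) * ((r ^ D)⁻¹ * r * C)) :=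
            ENNReal.ofReal_le_ofReal
              (mul_le_mul_of_nonneg_left hnorm (by positivity))
        _ = ENNReal.ofReal C := by rw [aux_pow_cancel hD hr]
    · have hz : gradient f (r • y) = 0 := by
        apply hgrad0
        rw [norm_smul, hy, mul_one, Real.norm_eq_abs, abs_of_pos hr]
        linarith
      have : g (r • y) = 0 := by
        rw [hg]
        simp [hz]
      simp [this]
  -- per-sphere-point integral bound
  have hbound : ∀ y : Metric.sphere (0 : EuclideanSpace ℝ (Fin D)) 1,
      ∫⁻ r : Set.Ioi (0:ℝ), ENNReal.ofReal ‖h (y, r)‖ ∂μ₂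
        ≤ ENNReal.ofReal C * ENNReal.ofReal R := by
    intro y
    have hy1 : ‖(y : EuclideanSpace ℝ (Fin D))‖ = 1 := mem_sphere_zero_iff_norm.1 y.2
    have e1 : ∫⁻ r : Set.Ioi (0:ℝ), ENNReal.ofReal ‖h (y, r)‖ ∂μ₂
        = ∫⁻ r in Set.Ioi (0:ℝ),
            ENNReal.ofReal (r ^ (D-1)) *
              ENNReal.ofReal ‖g (r • (y : EuclideanSpace ℝ (Fin D)))‖ ∂volume := by
      have hm1 : Measurable fun r : Set.Ioi (0:ℝ) => ENNReal.ofReal ‖h (y, r)‖ :=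
        ((hhmeas.comp (measurable_const.prodMk measurable_id)).norm).ennreal_ofReal
      rw [hμ₂, MeasureTheory.Measure.volumeIoiPow]
      rw [lintegral_withDensity_eq_lintegral_mul _
        ((measurable_subtype_coe.pow_const _).ennreal_ofReal) hm1]
      refine Eq.trans (lintegral_congr fun r => ?_)
        (lintegral_subtype_comap measurableSet_Ioi
          (fun t : ℝ => ENNReal.ofReal (t ^ (D-1)) *
            ENNReal.ofReal ‖g (t • (y : EuclideanSpace ℝ (Fin D)))‖))
      rfl
    rw [e1]
    calc ∫⁻ r in Set.Ioi (0:ℝ),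
            ENNReal.ofReal (r ^ (D-1)) *
              ENNReal.ofReal ‖g (r • (y : EuclideanSpace ℝ (Fin D)))‖ ∂volume
        ≤ ∫⁻ r in Set.Ioi (0:ℝ),
            (Set.Ioc (0:ℝ) R).indicator (fun _ => ENNReal.ofReal C) r ∂volume :=
          setLIntegral_mono (measurable_const.indicator measurableSet_Ioc)
            (fun r hr => hptbound (y : EuclideanSpace ℝ (Fin D)) hy1 r hr)
      _ ≤ ∫⁻ r, (Set.Ioc (0:ℝ) R).indicator (fun _ => ENNReal.ofReal C) r ∂volume :=
          setLIntegral_le_lintegral _ _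
      _ = ENNReal.ofReal C * volume (Set.Ioc (0:ℝ) R) := by
          rw [lintegral_indicator measurableSet_Ioc, setLIntegral_const]
      _ = ENNReal.ofReal C * ENNReal.ofReal R := by
          rw [Real.volume_Ioc, sub_zero]
  -- integrability of h
  have hInt : Integrable h (ν.prod μ₂) := by
    constructor
    · exact hhmeas.aestronglyMeasurable
    · rw [hasFiniteIntegral_iff_norm]
      calc ∫⁻ p, ENNReal.ofReal ‖h p‖ ∂(ν.prod μ₂)
          = ∫⁻ y, ∫⁻ r, ENNReal.ofReal ‖h (y, r)‖ ∂μ₂ ∂ν :=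
            lintegral_prod _ (hhmeas.norm.ennreal_ofReal.aemeasurable)
        _ ≤ ∫⁻ _, ENNReal.ofReal C * ENNReal.ofReal R ∂ν :=
            lintegral_mono' le_rfl (fun y => hbound y)
        _ = ν Set.univ * (ENNReal.ofReal C * ENNReal.ofReal R) := by
            rw [lintegral_const]
            ring
        _ < ⊤ := ENNReal.mul_lt_top (measure_lt_top _ _)
            (ENNReal.mul_lt_top ENNReal.ofReal_lt_top ENNReal.ofReal_lt_top)
  -- Step 3 : Fubini
  have step3 : ∫ p, h p ∂(ν.prod μ₂) = ∫ y, ∫ r, h (y, r) ∂μ₂ ∂ν :=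
    integral_prod h hInt
  -- inner integral
  have hinner : ∀ y : Metric.sphere (0 : EuclideanSpace ℝ (Fin D)) 1,
      ∫ r : Set.Ioi (0:ℝ), h (y, r) ∂μ₂ = - f 0 := by
    intro y
    have hy1 : ‖(y : EuclideanSpace ℝ (Fin D))‖ = 1 := mem_sphere_zero_iff_norm.1 y.2
    rw [hμ₂]
    simp only [MeasureTheory.Measure.volumeIoiPow, ENNReal.ofReal]
    rw [integral_withDensity_eq_integral_smul
      ((measurable_subtype_coe.pow_const _).real_toNNReal)
      (fun r : Set.Ioi (0:ℝ) => h (y, r))]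
    have e0 : ∫ r : Set.Ioi (0:ℝ), (r.1 ^ (D-1)).toNNReal • h (y, r)
          ∂((volume : Measure ℝ).comap Subtype.val)
        = ∫ t in Set.Ioi (0:ℝ),
            (t ^ (D-1)).toNNReal • g (t • (y : EuclideanSpace ℝ (Fin D))) ∂volume :=
      integral_subtype_comap measurableSet_Ioi
        (fun t : ℝ => (t ^ (D-1)).toNNReal • g (t • (y : EuclideanSpace ℝ (Fin D))))
    rw [e0]
    have e2 : Set.EqOn
        (fun t : ℝ => (t ^ (D-1)).toNNReal • g (t • (y : EuclideanSpace ℝ (Fin D))))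
        (fun t : ℝ => fderiv ℝ f (t • (y : EuclideanSpace ℝ (Fin D)))
          (y : EuclideanSpace ℝ (Fin D))) (Set.Ioi 0) := by
      intro r hr
      rw [Set.mem_Ioi] at hr
      simp only
      rw [NNReal.smul_def, Real.coe_toNNReal _ (by positivity), smul_eq_mul,
        hgr (y : EuclideanSpace ℝ (Fin D)) hy1 r hr, aux_pow_cancel hD hr]
    rw [setIntegral_congr_fun measurableSet_Ioi e2]
    exact ftc_line f hf hsupp (y : EuclideanSpace ℝ (Fin D)) hy1
  -- put everything together
  rw [step1, step2, step3]
  simp only [hinner]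
  rw [integral_const]
  -- compute the total sphere measure
  have hν_univ : ν Set.univ
      = (D : ℝ≥0∞) * volume (Metric.ball (0 : EuclideanSpace ℝ (Fin D)) 1) := by
    have := MeasureTheory.Measure.toSphere_apply_univ
      (volume : Measure (EuclideanSpace ℝ (Fin D)))
    rwa [hdim] at this
  have hD0 : (0:ℝ) < (D:ℝ) := by
    exact_mod_cast Nat.lt_of_lt_of_le Nat.zero_lt_one hD
  have hΓpos1 : 0 < Real.Gamma ((D:ℝ)/2 + 1) :=
    Real.Gamma_pos_of_pos (by positivity)
  have hball : volume (Metric.ball (0 : EuclideanSpace ℝ (Fin D)) 1)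
      = ENNReal.ofReal (Real.sqrt π ^ D / Real.Gamma ((D:ℝ)/2 + 1)) := by
    have := EuclideanSpace.volume_ball (Fin D) 0 1
    rw [this]
    simp [Fintype.card_fin]
  have htoReal : (ν Set.univ).toReal = (D:ℝ) * (Real.sqrt π ^ D / Real.Gamma ((D:ℝ)/2 + 1)) := by
    rw [hν_univ, hball, ENNReal.toReal_mul, ENNReal.toReal_natCast,
      ENNReal.toReal_ofReal (div_nonneg (pow_nonneg (Real.sqrt_nonneg _) _) hΓpos1.le)]
  rw [measureReal_def, htoReal]
  have hsq : Real.sqrt π ^ D = π ^ ((D:ℝ)/2) := by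
    rw [Real.sqrt_eq_rpow, ← Real.rpow_natCast (π ^ ((1:ℝ)/2)) D,
      ← Real.rpow_mul Real.pi_pos.le]
    congr 1
    ring
  have hΓ1 : Real.Gamma ((D:ℝ)/2 + 1) = ((D:ℝ)/2) * Real.Gamma ((D:ℝ)/2) :=
    Real.Gamma_add_one (div_pos hD0 two_pos).ne'
  have hΓpos : 0 < Real.Gamma ((D:ℝ)/2) := Real.Gamma_pos_of_pos (by positivity)
  rw [hsq, hΓ1, smul_eq_mul]
  field_simp
end

section
/- Let s ∈ ℂ and let H : ℝ × ℝ → ℂ be a continuously differentiable map satisfying H(u, t + 1) = H(u, t) for all u, t (so each H(u, ·) is a loop), and H(u, t) ≠ s for all u, t. Then ∫_0^1 (∂H/∂t)(0, t) / (H(0, t) − s) dt = ∫_0^1 (∂H/∂t)(1, t) / (H(1, t) − s) dt. (Loops that are smoothly homotopic in ℂ \ {s} have equal χ-invariants; the D = 2, N = 2 case of the invariance theorem.) -/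
open Real Complex intervalIntegral

/-- Loops that are smoothly homotopic in `ℂ \ {s}` have equal χ-invariants:
the `D = 2, N = 2` case of the invariance theorem. -/
theorem chi_invariant_homotopy_invariance_complex
    (s : ℂ) (H : ℝ × ℝ → ℂ) (hH : ContDiff ℝ 1 H)
    (hper : ∀ u t : ℝ, H (u, t + 1) = H (u, t))
    (hs : ∀ u t : ℝ, H (u, t) ≠ s) :
    ∫ t in (0 : ℝ)..1, deriv (fun τ => H (0, τ)) t / (H (0, t) - s)
      = ∫ t in (0 : ℝ)..1, deriv (fun τ => H (1, τ)) t / (H (1, t) - s) := by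
  -- the partial derivative in `t`
  set D : ℝ × ℝ → ℂ := fun p => fderiv ℝ H p (0, 1) with hD
  have hDcont : Continuous D :=
    (hH.continuous_fderiv one_ne_zero).clm_apply continuous_const
  have hder : ∀ u t : ℝ, HasDerivAt (fun τ => H (u, τ)) (D (u, t)) t := by
    intro u t
    have h1 : HasFDerivAt H (fderiv ℝ H (u, t)) (u, t) :=
      (hH.differentiable one_ne_zero).differentiableAt.hasFDerivAt
    have h2 : HasDerivAt (fun τ : ℝ => ((u, τ) : ℝ × ℝ)) (0, 1) t := by
      have := ((hasDerivAt_const t u).prodMk (hasDerivAt_id t))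
      simpa using this
    exact h1.comp_hasDerivAt t h2
  -- the integrand
  set f : ℝ → ℝ → ℂ := fun u t => D (u, t) / (H (u, t) - s) with hf
  have hfcont : Continuous (Function.uncurry f) := by
    apply hDcont.div (hH.continuous.sub continuous_const)
    intro p
    exact sub_ne_zero.2 (hs p.1 p.2)
  have hfc : ∀ u : ℝ, Continuous (f u) := fun u =>
    hfcont.comp (Continuous.prodMk_right u)
  -- the primitive
  set g : ℝ → ℝ → ℂ := fun u t => ∫ τ in (0:ℝ)..t, f u τ with hg
  have hgder : ∀ u t : ℝ, HasDerivAt (g u) (f u t) t := fun u t =>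
    intervalIntegral.integral_hasDerivAt_right ((hfc u).intervalIntegrable 0 t)
      ((hfc u).stronglyMeasurableAtFilter _ _) (hfc u).continuousAt
  -- `(H(u,t)-s) * exp(-g u t)` is constant in `t`, hence `exp (g u 1) = 1`
  have hkey : ∀ u : ℝ, Complex.exp (g u 1) = 1 := by
    intro u
    set F : ℝ → ℂ := fun t => (H (u, t) - s) * Complex.exp (-(g u t)) with hF
    have hFder : ∀ t : ℝ, HasDerivAt F 0 t := by
      intro t
      have h1 : HasDerivAt (fun t => H (u, t) - s) (D (u, t)) t :=
        (hder u t).sub_const s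
      have h2 : HasDerivAt (fun t => Complex.exp (-(g u t)))
          (Complex.exp (-(g u t)) * (-(f u t))) t :=
        ((hgder u t).neg).cexp
      have := h1.mul h2
      convert this using 1
      case e'_4 => rfl
      case e'_8 => rfl
      have hne : H (u, t) - s ≠ 0 := sub_ne_zero.2 (hs u t)
      rw [hf]
      field_simp
      ring
    have hconst : F 1 = F 0 :=
      is_const_of_deriv_eq_zero (fun t => (hFder t).differentiableAt)
        (fun t => (hFder t).deriv) 1 0
    have hg0 : g u 0 = 0 := intervalIntegral.integral_same
    have hH1 : H (u, 1) = H (u, 0) := by simpa using hper u 0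
    have hne : H (u, 0) - s ≠ 0 := sub_ne_zero.2 (hs u 0)
    have hexp : Complex.exp (-(g u 1)) = 1 := by
      have := hconst
      rw [hF] at this
      simp only [hg0, neg_zero, Complex.exp_zero, mul_one, hH1] at this
      exact mul_left_cancel₀ hne (by rw [mul_one]; exact this)
    rw [Complex.exp_neg] at hexp
    exact inv_eq_one.mp hexp
  -- `φ u = g u 1` is continuous and takes values in `2πiℤ`, so is constant
  set φ : ℝ → ℂ := fun u => g u 1 with hφ
  have hφcont : Continuous φ :=
    intervalIntegral.continuous_parametric_intervalIntegral_of_continuous' hfcont 0 1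
  have hint : ∀ u : ℝ, ∃ n : ℤ, φ u = n * (2 * π * I) := fun u =>
    Complex.exp_eq_one_iff.1 (hkey u)
  obtain ⟨n0, h0⟩ := hint 0
  obtain ⟨n1, h1⟩ := hint 1
  have hn : n0 = n1 := by
    by_contra hne
    set ψ : ℝ → ℝ := fun u => (φ u).im with hψdef
    have hψcont : Continuous ψ := Complex.continuous_im.comp hφcont
    have hψ : ∀ u : ℝ, ∃ n : ℤ, ψ u = 2 * π * n := by
      intro u
      obtain ⟨n, hn⟩ := hint u
      refine ⟨n, ?_⟩
      simp [hψdef, hn]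
      ring
    have hψ0 : ψ 0 = 2 * π * n0 := by simp [hψdef, h0]; ring
    have hψ1 : ψ 1 = 2 * π * n1 := by simp [hψdef, h1]; ring
    set m : ℤ := min n0 n1 with hm
    set M : ℤ := max n0 n1 with hM
    have hmM : m + 1 ≤ M := Int.lt_iff_add_one_le.mp (min_lt_max.2 hne)
    have hπ : (0:ℝ) < π := Real.pi_pos
    have hc : 2 * π * ((m : ℝ) + 1/2) ∈ Set.uIcc (ψ 0) (ψ 1) := by
      rw [hψ0, hψ1, Set.mem_uIcc]
      rcases min_cases n0 n1 with ⟨he, hle⟩ | ⟨he, hlt⟩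
      · left
        constructor
        · rw [← he]; nlinarith
        · have : (m:ℝ) + 1 ≤ (n1:ℝ) := by exact_mod_cast (show m + 1 ≤ n1 by omega)
          nlinarith
      · right
        constructor
        · rw [← he]; nlinarith
        · have : (m:ℝ) + 1 ≤ (n0:ℝ) := by exact_mod_cast (show m + 1 ≤ n0 by omega)
          nlinarith
    obtain ⟨u, _, hu⟩ := intermediate_value_uIcc hψcont.continuousOn hc
    obtain ⟨k, hk⟩ := hψ u
    rw [hk] at hu
    have : (k : ℝ) = (m : ℝ) + 1/2 := by
      have h2π : (2 * π) ≠ 0 := by positivity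
      field_simp at hu ⊢
      nlinarith
    have : (2 * k : ℝ) = (2 * m + 1 : ℤ) := by push_cast; linarith
    have : (2 * k : ℤ) = 2 * m + 1 := by exact_mod_cast this
    omega
  have hφeq : φ 0 = φ 1 := by rw [h0, h1, hn]
  have hL : (∫ t in (0:ℝ)..1, deriv (fun τ => H (0, τ)) t / (H (0, t) - s)) = φ 0 :=
    intervalIntegral.integral_congr (fun t _ => by rw [(hder 0 t).deriv])
  have hR : (∫ t in (0:ℝ)..1, deriv (fun τ => H (1, τ)) t / (H (1, t) - s)) = φ 1 :=
    intervalIntegral.integral_congr (fun t _ => by rw [(hder 1 t).deriv])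
  rw [hL, hR, hφeq]
end

section
/- Let η : ℝ → ℝ³ be a continuously differentiable loop (η(t+1) = η(t)) and define B(x) = (1/(4π)) ∫_0^1 η′(t) × (x − η(t)) / ‖x − η(t)‖³ dt. Then for every x not in the image of η, B is differentiable at x and its Jacobian is symmetric: ⟪ (fderiv ℝ B x) u, v ⟫ = ⟪ (fderiv ℝ B x) v, u ⟫ for all u, v ∈ ℝ³. (The curl of the Biot–Savart field vanishes away from the source curve, i.e. the 1-form ψ_S = B · dl is closed on ℝ³ \ S.) -/
open scoped Real RealInnerProductSpace

/-- The standard cross product on `ℝ³ = EuclideanSpace ℝ (Fin 3)`. -/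
noncomputable def cross3 (a b : EuclideanSpace ℝ (Fin 3)) : EuclideanSpace ℝ (Fin 3) :=
  (WithLp.equiv 2 (Fin 3 → ℝ)).symm
    ![a 1 * b 2 - a 2 * b 1, a 2 * b 0 - a 0 * b 2, a 0 * b 1 - a 1 * b 0]


local notation "E₃" => EuclideanSpace ℝ (Fin 3)

lemma cross3_apply (a b : E₃) (i : Fin 3) :
    cross3 a b i = ![a 1 * b 2 - a 2 * b 1, a 2 * b 0 - a 0 * b 2, a 0 * b 1 - a 1 * b 0] i := rfl

noncomputable def crossl : E₃ →ₗ[ℝ] E₃ →ₗ[ℝ] E₃ :=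
  LinearMap.mk₂ ℝ cross3
    (fun a a' b => by
      ext i; fin_cases i <;>
        simp [cross3_apply, PiLp.add_apply] <;> ring)
    (fun c a b => by
      ext i; fin_cases i <;>
        simp [cross3_apply, PiLp.smul_apply, smul_eq_mul] <;> ring)
    (fun a b b' => by
      ext i; fin_cases i <;>
        simp [cross3_apply, PiLp.add_apply] <;> ring)
    (fun c a b => by
      ext i; fin_cases i <;>
        simp [cross3_apply, PiLp.smul_apply, smul_eq_mul] <;> ring)

noncomputable def crossL : E₃ →L[ℝ] E₃ →L[ℝ] E₃ :=
  LinearMap.toContinuousLinearMap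
    ((LinearMap.toContinuousLinearMap :
        (E₃ →ₗ[ℝ] E₃) ≃ₗ[ℝ] (E₃ →L[ℝ] E₃)).toLinearMap.comp crossl)

@[simp] lemma crossL_apply (a b : E₃) : crossL a b = cross3 a b := rfl


noncomputable def gradG (r : E₃) : E₃ →L[ℝ] E₃ :=
  (‖r‖ ^ 3)⁻¹ • ContinuousLinearMap.id ℝ E₃ +
    (((-3) * (‖r‖ ^ 5)⁻¹) • innerSL ℝ r).smulRight r

lemma gradG_apply (r u : E₃) :
    gradG r u = (‖r‖ ^ 3)⁻¹ • u + ((-3) * (‖r‖ ^ 5)⁻¹ * ⟪r, u⟫) • r := by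
  simp [gradG, smul_smul]

lemma hasFDerivAt_norm3inv_smul (r : E₃) (hr : r ≠ 0) :
    HasFDerivAt (fun y : E₃ => (‖y‖ ^ 3)⁻¹ • y) (gradG r) r := by
  have hn : ‖r‖ ≠ 0 := norm_ne_zero_iff.mpr hr
  have hn2 : ‖r‖ ^ 2 ≠ 0 := pow_ne_zero _ hn
  -- derivative of the norm
  have hq : HasFDerivAt (fun y : E₃ => ‖y‖ ^ 2) (2 • innerSL ℝ r) r := by
    simpa using (hasFDerivAt_id r).norm_sq
  have hs : HasFDerivAt (fun y : E₃ => ‖y‖)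
      ((1 / (2 * ‖r‖)) • (2 • innerSL ℝ r)) r := by
    have h := (Real.hasDerivAt_sqrt hn2).comp_hasFDerivAt r hq
    have heq : ((fun x => Real.sqrt x) ∘ fun y : E₃ => ‖y‖ ^ 2) = fun y : E₃ => ‖y‖ := by
      funext y; simp [Real.sqrt_sq (norm_nonneg y)]
    rw [Real.sqrt_sq (norm_nonneg r)] at h
    rwa [heq] at h
  -- derivative of (‖y‖^3)⁻¹
  have h3 : HasDerivAt (fun s : ℝ => (s ^ 3)⁻¹)
      (-(3 * ‖r‖ ^ 2) / (‖r‖ ^ 3) ^ 2) ‖r‖ := by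
    have h := (hasDerivAt_pow 3 ‖r‖).inv (pow_ne_zero _ hn)
    simp at h
    exact h
  have hc : HasFDerivAt (fun y : E₃ => (‖y‖ ^ 3)⁻¹)
      ((-(3 * ‖r‖ ^ 2) / (‖r‖ ^ 3) ^ 2) • ((1 / (2 * ‖r‖)) • (2 • innerSL ℝ r))) r :=
    h3.comp_hasFDerivAt r hs
  have := hc.smul (hasFDerivAt_id r)
  refine this.congr_fderiv ?_
  ext u
  simp only [ContinuousLinearMap.add_apply, ContinuousLinearMap.smul_apply,
    ContinuousLinearMap.smulRight_apply, ContinuousLinearMap.coe_id', id_eq,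
    ContinuousLinearMap.coe_smul', Pi.smul_apply, innerSL_apply_apply, smul_eq_mul]
  rw [gradG_apply]
  field_simp
  ring


lemma key_alg (r a u v : E₃) (hr : r ≠ 0) :
    ⟪cross3 a (gradG r u), v⟫ - ⟪cross3 a (gradG r v), u⟫
      = ⟪cross3 (gradG r (-a)) u, v⟫ := by
  have hn : ‖r‖ ≠ 0 := norm_ne_zero_iff.mpr hr
  have h2 : ‖r‖ ^ 2 = r 0 ^ 2 + r 1 ^ 2 + r 2 ^ 2 := by
    rw [EuclideanSpace.norm_eq, Real.sq_sqrt (by positivity)]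
    simp [Fin.sum_univ_three, sq_abs]
  have hk : (‖r‖ ^ 3)⁻¹ = (‖r‖ ^ 5)⁻¹ * (r 0 ^ 2 + r 1 ^ 2 + r 2 ^ 2) := by
    rw [← h2]; field_simp
  simp only [gradG_apply, PiLp.inner_apply, RCLike.inner_apply, conj_trivial,
    cross3_apply, Fin.sum_univ_three, PiLp.add_apply, PiLp.smul_apply, PiLp.neg_apply,
    smul_eq_mul, Matrix.cons_val_zero, Matrix.cons_val_one, Matrix.head_cons,
    Matrix.cons_val_two, Matrix.tail_cons]
  rw [hk]
  ring

lemma coord_le_norm (a : E₃) (i : Fin 3) : |a i| ≤ ‖a‖ := by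
  rw [EuclideanSpace.norm_eq]
  refine Real.le_sqrt_of_sq_le ?_
  rw [sq_abs]
  have := Finset.single_le_sum (f := fun j => ‖a j‖ ^ 2)
    (fun j _ => by positivity) (Finset.mem_univ i)
  simpa [Real.norm_eq_abs, sq_abs] using this

lemma cross3_norm_le (a b : E₃) : ‖cross3 a b‖ ≤ 4 * ‖a‖ * ‖b‖ := by
  have hcomp : ∀ i : Fin 3, |cross3 a b i| ≤ 2 * ‖a‖ * ‖b‖ := by
    intro i
    have h0a := coord_le_norm a 0; have h1a := coord_le_norm a 1
    have h2a := coord_le_norm a 2; have h0b := coord_le_norm b 0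
    have h1b := coord_le_norm b 1; have h2b := coord_le_norm b 2
    have hbn : (0:ℝ) ≤ ‖b‖ := norm_nonneg b
    have han : (0:ℝ) ≤ ‖a‖ := norm_nonneg a
    fin_cases i <;>
    · rw [cross3_apply]
      simp only [Matrix.cons_val_zero, Matrix.cons_val_one, Matrix.head_cons,
        Matrix.cons_val_two, Matrix.tail_cons]
      refine (abs_sub _ _).trans ?_
      rw [abs_mul, abs_mul]
      nlinarith [abs_nonneg (a 0), abs_nonneg (a 1), abs_nonneg (a 2),
        abs_nonneg (b 0), abs_nonneg (b 1), abs_nonneg (b 2)]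
  have hM : (0:ℝ) ≤ 2 * ‖a‖ * ‖b‖ := by positivity
  rw [EuclideanSpace.norm_eq]
  have hsum : ∑ i, ‖cross3 a b i‖ ^ 2 ≤ (4 * ‖a‖ * ‖b‖) ^ 2 := by
    have h0 := hcomp 0; have h1 := hcomp 1; have h2 := hcomp 2
    rw [Fin.sum_univ_three]
    simp only [Real.norm_eq_abs, sq_abs]
    nlinarith [abs_nonneg (cross3 a b 0), abs_nonneg (cross3 a b 1),
      abs_nonneg (cross3 a b 2), sq_abs (cross3 a b 0), sq_abs (cross3 a b 1),
      sq_abs (cross3 a b 2)]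
  calc Real.sqrt (∑ i, ‖cross3 a b i‖ ^ 2) ≤ Real.sqrt ((4 * ‖a‖ * ‖b‖) ^ 2) :=
        Real.sqrt_le_sqrt hsum
    _ = 4 * ‖a‖ * ‖b‖ := Real.sqrt_sq (by positivity)

lemma crossL_opNorm (a : E₃) : ‖crossL a‖ ≤ 4 * ‖a‖ :=
  ContinuousLinearMap.opNorm_le_bound _ (by positivity)
    (fun b => by simpa [mul_assoc] using cross3_norm_le a b)

lemma gradG_opNorm (r : E₃) (hr : r ≠ 0) : ‖gradG r‖ ≤ 4 * (‖r‖ ^ 3)⁻¹ := by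
  have hn : 0 < ‖r‖ := norm_pos_iff.mpr hr
  refine ContinuousLinearMap.opNorm_le_bound _ (by positivity) fun u => ?_
  rw [gradG_apply]
  have h1 : ‖(‖r‖ ^ 3)⁻¹ • u‖ = (‖r‖ ^ 3)⁻¹ * ‖u‖ := by
    rw [norm_smul, Real.norm_eq_abs, abs_of_nonneg (by positivity)]
  have h2 : ‖((-3) * (‖r‖ ^ 5)⁻¹ * ⟪r, u⟫) • r‖ ≤ 3 * (‖r‖ ^ 3)⁻¹ * ‖u‖ := by
    rw [norm_smul, Real.norm_eq_abs, abs_mul, abs_mul,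
      abs_of_nonneg (show (0:ℝ) ≤ (‖r‖ ^ 5)⁻¹ by positivity)]
    have hiu := abs_real_inner_le_norm r u
    have : |(-3 : ℝ)| = 3 := by norm_num
    rw [this]
    calc 3 * (‖r‖ ^ 5)⁻¹ * |⟪r, u⟫| * ‖r‖
        ≤ 3 * (‖r‖ ^ 5)⁻¹ * (‖r‖ * ‖u‖) * ‖r‖ := by gcongr
      _ = 3 * (‖r‖ ^ 3)⁻¹ * ‖u‖ := by field_simp
  calc ‖(‖r‖ ^ 3)⁻¹ • u + ((-3) * (‖r‖ ^ 5)⁻¹ * ⟪r, u⟫) • r‖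
      ≤ ‖(‖r‖ ^ 3)⁻¹ • u‖ + ‖((-3) * (‖r‖ ^ 5)⁻¹ * ⟪r, u⟫) • r‖ := norm_add_le _ _
    _ ≤ (‖r‖ ^ 3)⁻¹ * ‖u‖ + 3 * (‖r‖ ^ 3)⁻¹ * ‖u‖ := by rw [h1]; linarith
    _ = 4 * (‖r‖ ^ 3)⁻¹ * ‖u‖ := by ring

/-- Away from the source loop `η`, the Biot–Savart field `B` is differentiable and its
Jacobian is symmetric (i.e. `curl B = 0`, so the 1-form `ψ_S = B · dl` is closed on
`ℝ³ \ S`). -/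
theorem biot_savart_field_is_curl_free
    (η : ℝ → EuclideanSpace ℝ (Fin 3)) (hη : ContDiff ℝ 1 η)
    (hηper : ∀ t : ℝ, η (t + 1) = η t)
    (B : EuclideanSpace ℝ (Fin 3) → EuclideanSpace ℝ (Fin 3))
    (hB : ∀ x : EuclideanSpace ℝ (Fin 3),
      B x = (1 / (4 * π)) •
        ∫ t in (0 : ℝ)..1, (‖x - η t‖ ^ 3)⁻¹ • cross3 (deriv η t) (x - η t)) :
    ∀ x : EuclideanSpace ℝ (Fin 3), (∀ t : ℝ, x ≠ η t) →
      DifferentiableAt ℝ B x ∧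
        ∀ u v : EuclideanSpace ℝ (Fin 3),
          ⟪(fderiv ℝ B x) u, v⟫ = ⟪(fderiv ℝ B x) v, u⟫ := by
  intro x hx
  have hηc : Continuous η := hη.continuous
  have hA : Continuous (deriv η) := hη.continuous_deriv le_rfl
  have hηd : ∀ t, HasDerivAt η (deriv η t) t := fun t =>
    ((hη.differentiable one_ne_zero) t).hasDerivAt
  -- distance to the (compact) curve
  set K : Set E₃ := η '' Set.Icc 0 1 with hK
  have hKc : IsCompact K := isCompact_Icc.image hηc
  have hxK : x ∉ K := by
    rintro ⟨t, -, rfl⟩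
    exact hx t rfl
  set δ := Metric.infDist x K with hδdef
  have hδ : 0 < δ :=
    (hKc.isClosed.notMem_iff_infDist_pos ⟨η 0, ⟨0, ⟨le_refl 0, zero_le_one⟩, rfl⟩⟩).mp hxK
  have hεpos : 0 < δ / 2 := half_pos hδ
  have hfar : ∀ y ∈ Metric.ball x (δ / 2), ∀ t ∈ Set.Icc (0:ℝ) 1, δ / 2 ≤ ‖y - η t‖ := by
    intro y hy t ht
    have h1 : δ ≤ dist x (η t) := Metric.infDist_le_dist_of_mem ⟨t, ht, rfl⟩
    have h2 : dist x y < δ / 2 := by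
      rw [dist_comm]; exact Metric.mem_ball.mp hy
    have h3 : dist x (η t) ≤ dist x y + dist y (η t) := dist_triangle _ _ _
    have h4 : dist y (η t) = ‖y - η t‖ := dist_eq_norm _ _
    linarith
  have hneball : ∀ y ∈ Metric.ball x (δ / 2), ∀ t ∈ Set.Icc (0:ℝ) 1, y - η t ≠ 0 := by
    intro y hy t ht
    have := hfar y hy t ht
    intro h0
    rw [h0, norm_zero] at this
    linarith
  have hnex : ∀ t : ℝ, x - η t ≠ 0 := fun t => sub_ne_zero.mpr (hx t)
  obtain ⟨C, hC⟩ := (isCompact_Icc (a := (0:ℝ)) (b := 1)).exists_bound_of_continuousOn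
    hA.continuousOn
  have hC0 : 0 ≤ C := le_trans (norm_nonneg (deriv η 0)) (hC 0 ⟨le_refl 0, zero_le_one⟩)
  set F : E₃ → ℝ → E₃ :=
    fun y t => (‖y - η t‖ ^ 3)⁻¹ • cross3 (deriv η t) (y - η t) with hFdef
  set F' : E₃ → ℝ → E₃ →L[ℝ] E₃ :=
    fun y t => (crossL (deriv η t)).comp (gradG (y - η t)) with hF'def
  -- continuity of t ↦ F' x t  (x avoids the whole curve)
  have hrc : Continuous fun t => x - η t := continuous_const.sub hηc
  have hgradc : Continuous fun t => gradG (x - η t) := by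
    have hnorm3 : Continuous fun t => (‖x - η t‖ ^ 3)⁻¹ :=
      (hrc.norm.pow 3).inv₀ fun t => pow_ne_zero _ (norm_ne_zero_iff.mpr (hnex t))
    have hnorm5 : Continuous fun t => (-3 : ℝ) * (‖x - η t‖ ^ 5)⁻¹ :=
      continuous_const.mul
        ((hrc.norm.pow 5).inv₀ fun t => pow_ne_zero _ (norm_ne_zero_iff.mpr (hnex t)))
    have h1 : Continuous fun t => (‖x - η t‖ ^ 3)⁻¹ • ContinuousLinearMap.id ℝ E₃ :=
      hnorm3.smul continuous_const
    have hinner : Continuous fun t =>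
        ((-3 : ℝ) * (‖x - η t‖ ^ 5)⁻¹) • innerSL ℝ (x - η t) :=
      hnorm5.smul ((innerSL ℝ).continuous.comp hrc)
    have h2 : Continuous fun t =>
        (((-3 : ℝ) * (‖x - η t‖ ^ 5)⁻¹) • innerSL ℝ (x - η t)).smulRight (x - η t) := by
      have : (fun t =>
          (((-3 : ℝ) * (‖x - η t‖ ^ 5)⁻¹) • innerSL ℝ (x - η t)).smulRight (x - η t)) =
          fun t => ContinuousLinearMap.smulRightL ℝ E₃ E₃
            (((-3 : ℝ) * (‖x - η t‖ ^ 5)⁻¹) • innerSL ℝ (x - η t)) (x - η t) := rfl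
      rw [this]
      exact ((ContinuousLinearMap.smulRightL ℝ E₃ E₃).continuous.comp hinner).clm_apply hrc
    exact h1.add h2
  have hF'cont : Continuous fun t => F' x t :=
    Continuous.clm_comp (crossL.continuous.comp hA) hgradc
  -- differentiability of F in the ball, for t ∈ [0,1]
  have hdiff : ∀ t ∈ Set.Icc (0:ℝ) 1, ∀ y ∈ Metric.ball x (δ / 2),
      HasFDerivAt (fun y => F y t) (F' y t) y := by
    intro t ht y hy
    have hrne := hneball y hy t ht
    have h1 : HasFDerivAt (fun y : E₃ => y - η t) (ContinuousLinearMap.id ℝ E₃) y :=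
      (hasFDerivAt_id y).sub_const (η t)
    have h2 := (hasFDerivAt_norm3inv_smul _ hrne).comp y h1
    have h3 := ((crossL (deriv η t)).hasFDerivAt).comp y h2
    have hfun : ((fun w => crossL (deriv η t) w) ∘
        ((fun y : E₃ => (‖y‖ ^ 3)⁻¹ • y) ∘ fun y : E₃ => y - η t)) = fun y => F y t := by
      funext z
      simp [hFdef, Function.comp, map_smul]
    rw [hfun] at h3
    simpa [hF'def] using h3
  -- apply differentiation under the integral sign
  have hmain : HasFDerivAt (fun y => ∫ t in (0:ℝ)..1, F y t)
      (∫ t in (0:ℝ)..1, F' x t) x := by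
    apply intervalIntegral.hasFDerivAt_integral_of_dominated_of_fderiv_le
      (s := Metric.ball x (δ / 2)) (bound := fun _ => 16 * C * ((δ / 2) ^ 3)⁻¹)
      (Metric.ball_mem_nhds x hεpos)
    · filter_upwards [Metric.ball_mem_nhds x hεpos] with y hy
      have hcont : ContinuousOn (F y) (Set.Icc 0 1) := by
        have hry : Continuous fun t => y - η t := continuous_const.sub hηc
        have hcr : Continuous fun t => cross3 (deriv η t) (y - η t) := by
          have : Continuous fun t => crossL (deriv η t) (y - η t) :=
            (crossL.continuous.comp hA).clm_apply hry
          simpa using this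
        have hinv : ContinuousOn (fun t => (‖y - η t‖ ^ 3)⁻¹) (Set.Icc 0 1) :=
          (hry.norm.pow 3).continuousOn.inv₀ fun t ht =>
            pow_ne_zero _ (norm_ne_zero_iff.mpr (hneball y hy t ht))
        exact hinv.smul hcr.continuousOn
      have hsub : Set.uIoc (0:ℝ) 1 ⊆ Set.Icc 0 1 := by
        rw [Set.uIoc_of_le zero_le_one]; exact Set.Ioc_subset_Icc_self
      exact (hcont.mono hsub).aestronglyMeasurable measurableSet_uIoc
    · apply Continuous.intervalIntegrable
      have hcr : Continuous fun t => cross3 (deriv η t) (x - η t) := by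
        have : Continuous fun t => crossL (deriv η t) (x - η t) :=
          (crossL.continuous.comp hA).clm_apply hrc
        simpa using this
      exact (((hrc.norm.pow 3).inv₀ fun t =>
        pow_ne_zero _ (norm_ne_zero_iff.mpr (hnex t))).smul hcr)
    · exact hF'cont.aestronglyMeasurable
    · refine Filter.Eventually.of_forall fun t ht y hy => ?_
      have ht' : t ∈ Set.Icc (0:ℝ) 1 := by
        rw [Set.uIoc_of_le zero_le_one] at ht
        exact Set.Ioc_subset_Icc_self ht
      have hrne := hneball y hy t ht'
      have hfar' := hfar y hy t ht'
      calc ‖(crossL (deriv η t)).comp (gradG (y - η t))‖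
          ≤ ‖crossL (deriv η t)‖ * ‖gradG (y - η t)‖ :=
            ContinuousLinearMap.opNorm_comp_le _ _
        _ ≤ (4 * C) * (4 * ((δ / 2) ^ 3)⁻¹) := by
            have hb1 : ‖crossL (deriv η t)‖ ≤ 4 * C :=
              (crossL_opNorm _).trans (by have := hC t ht'; linarith)
            have hb2 : ‖gradG (y - η t)‖ ≤ 4 * ((δ / 2) ^ 3)⁻¹ := by
              refine (gradG_opNorm _ hrne).trans ?_
              have h3 : (δ / 2) ^ 3 ≤ ‖y - η t‖ ^ 3 :=
                pow_le_pow_left₀ hεpos.le hfar' 3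
              have h4 : (‖y - η t‖ ^ 3)⁻¹ ≤ ((δ / 2) ^ 3)⁻¹ :=
                inv_anti₀ (by positivity) h3
              linarith
            exact mul_le_mul hb1 hb2 (norm_nonneg _) (by positivity)
        _ = 16 * C * ((δ / 2) ^ 3)⁻¹ := by ring
    · exact intervalIntegrable_const
    · refine Filter.Eventually.of_forall fun t ht y hy => ?_
      have ht' : t ∈ Set.Icc (0:ℝ) 1 := by
        rw [Set.uIoc_of_le zero_le_one] at ht
        exact Set.Ioc_subset_Icc_self ht
      exact hdiff t ht' y hy
  have hBeq : B = fun y => (1 / (4 * π)) • ∫ t in (0:ℝ)..1, F y t := by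
    funext y; exact hB y
  have hMain : HasFDerivAt B ((1 / (4 * π)) • ∫ t in (0:ℝ)..1, F' x t) x := by
    rw [hBeq]; exact hmain.fun_const_smul _
  refine ⟨hMain.differentiableAt, ?_⟩
  intro u v
  rw [hMain.fderiv]
  simp only [ContinuousLinearMap.smul_apply, real_inner_smul_left]
  congr 1
  -- reduce to scalar integrals
  have hII : IntervalIntegrable (fun t => F' x t) MeasureTheory.volume 0 1 :=
    hF'cont.intervalIntegrable 0 1
  have hinner : ∀ w z : E₃, ⟪(∫ t in (0:ℝ)..1, F' x t) w, z⟫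
      = ∫ t in (0:ℝ)..1, ⟪F' x t w, z⟫ := by
    intro w z
    rw [ContinuousLinearMap.intervalIntegral_apply hII w, real_inner_comm]
    have hIw : IntervalIntegrable (fun t => F' x t w) MeasureTheory.volume 0 1 :=
      (hF'cont.clm_apply continuous_const).intervalIntegrable 0 1
    rw [show (⟪z, ∫ t in (0:ℝ)..1, F' x t w⟫ : ℝ)
        = innerSL ℝ z (∫ t in (0:ℝ)..1, F' x t w) from rfl,
      ← ContinuousLinearMap.intervalIntegral_comp_comm (innerSL ℝ z) hIw]
    refine intervalIntegral.integral_congr fun t _ => ?_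
    simp only [innerSL_apply_apply]
    exact (real_inner_comm z ((F' x t) w)).symm
  rw [hinner u v, hinner v u]
  have hcont1 : Continuous fun t => (⟪F' x t u, v⟫ : ℝ) :=
    (hF'cont.clm_apply continuous_const).inner continuous_const
  have hcont2 : Continuous fun t => (⟪F' x t v, u⟫ : ℝ) :=
    (hF'cont.clm_apply continuous_const).inner continuous_const
  rw [← sub_eq_zero, ← intervalIntegral.integral_sub (hcont1.intervalIntegrable 0 1)
    (hcont2.intervalIntegrable 0 1)]
  -- the integrand is the derivative of a periodic function
  set Luv : E₃ →L[ℝ] ℝ := (innerSL ℝ v).comp (crossL.flip u) with hLuv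
  set φ : ℝ → ℝ := fun t => Luv ((‖x - η t‖ ^ 3)⁻¹ • (x - η t)) with hφ
  have hφd : ∀ t, HasDerivAt φ (⟪F' x t u, v⟫ - ⟪F' x t v, u⟫) t := by
    intro t
    have hrne := hnex t
    have h1 : HasDerivAt (fun s => x - η s) (-(deriv η t)) t := (hηd t).const_sub x
    have h2 := (hasFDerivAt_norm3inv_smul _ hrne).comp_hasDerivAt t h1
    have h3 := Luv.hasFDerivAt.comp_hasDerivAt t h2
    have hval : Luv (gradG (x - η t) (-(deriv η t)))
        = ⟪F' x t u, v⟫ - ⟪F' x t v, u⟫ := by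
      have e1 : (⟪F' x t u, v⟫ : ℝ)
          = ⟪cross3 (deriv η t) (gradG (x - η t) u), v⟫ := rfl
      have e2 : (⟪F' x t v, u⟫ : ℝ)
          = ⟪cross3 (deriv η t) (gradG (x - η t) v), u⟫ := rfl
      have e3 : Luv (gradG (x - η t) (-(deriv η t)))
          = ⟪cross3 (gradG (x - η t) (-(deriv η t))) u, v⟫ := by
        rw [hLuv]
        simp only [ContinuousLinearMap.comp_apply, ContinuousLinearMap.flip_apply,
          innerSL_apply_apply, crossL_apply]
        exact real_inner_comm _ _
      rw [e1, e2, e3, ← key_alg (x - η t) (deriv η t) u v hrne]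
    rw [← hval]
    exact h3
  have hFTC := intervalIntegral.integral_eq_sub_of_hasDerivAt
    (f := φ) (f' := fun t => ⟪F' x t u, v⟫ - ⟪F' x t v, u⟫)
    (fun t _ => hφd t) ((hcont1.sub hcont2).intervalIntegrable 0 1)
  rw [hFTC]
  have hper : η 1 = η 0 := by simpa using hηper 0
  simp [hφ, hper]
end
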